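/- (Suboptimality-robust regret bound) Let V be a real Hilbert space, λ > 0, B > 0, and consider T rounds of the CoRectron algorithm: A_0 = λI, ζ_0 = 0, and for each t = 1,…,T, ŵ_t = -A_{t-1}^{-1}ζ_{t-1}; the learner is given a nonempty set X_t ⊆ V, picks x̂_t ∈ X_t satisfying ⟨ŵ_t, x̂_t⟩ ≥ ⟨ŵ_t, x⟩ for all x ∈ X_t, observes x_t ∈ X_t (not necessarily optimal for u), sets g_t = x̂_t - x_t, and updates A_t = A_{t-1} + g_t ⊗ g_t, ζ_t = ζ_{t-1} + g_t. Let u ∈ V and assume ⟨u, x - x'⟩ ≤ B for all x, x' ∈ X_t and every t. Let δ_1,…,δ_T ≥ 0 be real numbers with δ_t ≥ ⟨u, x̂_t - x_t⟩ for every t (e.g., δ_t = max_{x∈X_t}⟨u,x⟩ - ⟨u,x_t⟩), and set Δ_T = Σ_{t=1}^T δ_t and H_T = log det(I_T + λ^{-1} K_T). Then the regret R_T(u) = Σ_{t=1}^T ⟨u, x_t - x̂_t⟩ satisfies R_T(u) ≤ B·H_T + ‖u‖·√(λ·H_T) + √(2B·Δ_T·H_T). -/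

import Mathlib

open scoped RealInnerProductSpace

/-- The rank-one operator `a ⊗ a : v ↦ ⟪a, v⟫ • a` on a real inner product space. -/
noncomputable def rankOne {V : Type*} [NormedAddCommGroup V] [InnerProductSpace ℝ V]
    (a : V) : V →L[ℝ] V :=
  (innerSL ℝ a).smulRight a

section Aux
variable {V : Type*} [NormedAddCommGroup V] [InnerProductSpace ℝ V]

lemma rankOne_apply (a v : V) : rankOne a v = ⟪a, v⟫ • a := rfl

noncomputable def opA (lam : ℝ) (G : ℕ → V) : ℕ → (V →L[ℝ] V)
  | 0 => lam • 1
  | n+1 => opA lam G n + rankOne (G n)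

noncomputable def opP (lam : ℝ) (G : ℕ → V) : ℕ → (V →L[ℝ] V)
  | 0 => lam⁻¹ • 1
  | n+1 => opP lam G n -
      (1 + ⟪G n, opP lam G n (G n)⟫)⁻¹ • rankOne (opP lam G n (G n))

lemma opA_apply (lam : ℝ) (G : ℕ → V) (n : ℕ) (v : V) :
    opA lam G n v = lam • v + ∑ i ∈ Finset.range n, ⟪G i, v⟫ • G i := by
  induction n with
  | zero => simp [opA]
  | succ n ih =>
      simp [opA, Finset.sum_range_succ, ih, rankOne_apply, add_assoc]

lemma opA_symm (lam : ℝ) (G : ℕ → V) (n : ℕ) (v w : V) :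
    ⟪opA lam G n v, w⟫ = ⟪v, opA lam G n w⟫ := by
  simp only [opA_apply, inner_add_left, inner_add_right, inner_smul_left, inner_smul_right,
    sum_inner, inner_sum, RCLike.ofReal_real_eq_id, id, conj_trivial]
  congr 1
  refine Finset.sum_congr rfl fun i _ => ?_
  rw [real_inner_comm v (G i)]
  ring

lemma opA_pos (lam : ℝ) (G : ℕ → V) (n : ℕ) (v : V) :
    lam * ‖v‖ ^ 2 ≤ ⟪v, opA lam G n v⟫ := by
  rw [opA_apply, inner_add_right, inner_smul_right, inner_sum, real_inner_self_eq_norm_sq]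
  have : 0 ≤ ∑ i ∈ Finset.range n, ⟪v, ⟪G i, v⟫ • G i⟫ := by
    refine Finset.sum_nonneg fun i _ => ?_
    rw [inner_smul_right, real_inner_comm]
    exact mul_self_nonneg _
  linarith


lemma opP_spec (lam : ℝ) (hlam : 0 < lam) (G : ℕ → V) (n : ℕ) :
    (∀ v w, ⟪opP lam G n v, w⟫ = ⟪v, opP lam G n w⟫) ∧
      (∀ v, opA lam G n (opP lam G n v) = v) ∧
      (∀ v, opP lam G n (opA lam G n v) = v) := by
  induction n with
  | zero =>
      refine ⟨fun v w => ?_, fun v => ?_, fun v => ?_⟩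
      · simp [opP, inner_smul_left, inner_smul_right]
      · simp [opP, opA, smul_smul, mul_inv_cancel₀ hlam.ne', inv_mul_cancel₀ hlam.ne']
      · simp [opP, opA, smul_smul, mul_inv_cancel₀ hlam.ne', inv_mul_cancel₀ hlam.ne']
  | succ n ih =>
      obtain ⟨hsym, hAP, hPA⟩ := ih
      set P := opP lam G n with hP
      set g := G n with hg
      have hs0 : 0 ≤ ⟪g, P g⟫ := by
        calc (0:ℝ) ≤ lam * ‖P g‖ ^ 2 := by positivity
          _ ≤ ⟪P g, opA lam G n (P g)⟫ := opA_pos lam G n (P g)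
          _ = ⟪P g, g⟫ := by rw [hAP g]
          _ = ⟪g, P g⟫ := real_inner_comm _ _
      have hs1 : (0:ℝ) < 1 + ⟪g, P g⟫ := by linarith
      have hsne : (1 + ⟪g, P g⟫) ≠ 0 := hs1.ne'
      have hPn1 : opP lam G (n+1) = P - (1 + ⟪g, P g⟫)⁻¹ • rankOne (P g) := rfl
      have hAn1 : opA lam G (n+1) = opA lam G n + rankOne g := rfl
      refine ⟨fun v w => ?_, fun v => ?_, fun v => ?_⟩
      · simp only [hPn1, ContinuousLinearMap.sub_apply, ContinuousLinearMap.smul_apply,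
          rankOne_apply, inner_sub_left, inner_sub_right, inner_smul_left, inner_smul_right,
          RCLike.ofReal_real_eq_id, id, conj_trivial, hsym v w]
        rw [real_inner_comm v (P g)]
        ring
      · simp only [hPn1, hAn1, ContinuousLinearMap.sub_apply, ContinuousLinearMap.smul_apply,
          ContinuousLinearMap.add_apply, rankOne_apply, map_sub, map_smul, hAP,
          inner_sub_right, inner_smul_right]
        rw [hsym g v]
        match_scalars <;> field_simp <;> ring
      · simp only [hPn1, hAn1, ContinuousLinearMap.sub_apply, ContinuousLinearMap.smul_apply,
          ContinuousLinearMap.add_apply, rankOne_apply, map_add, map_smul, hPA,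
          inner_add_right, inner_smul_right]
        rw [hsym g (opA lam G n v), hPA v, real_inner_comm (P g) g]
        have hsne' : (1 + ⟪P g, g⟫) ≠ 0 := by rwa [real_inner_comm]
        match_scalars <;> (field_simp; try ring)


lemma opP_inner_nonneg (lam : ℝ) (hlam : 0 < lam) (G : ℕ → V) (n : ℕ) (v : V) :
    0 ≤ ⟪v, opP lam G n v⟫ := by
  obtain ⟨hsym, hAP, hPA⟩ := opP_spec lam hlam G n
  set P := opP lam G n
  calc (0:ℝ) ≤ lam * ‖P v‖ ^ 2 := by positivity
    _ ≤ ⟪P v, opA lam G n (P v)⟫ := opA_pos lam G n (P v)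
    _ = ⟪P v, v⟫ := by rw [hAP v]
    _ = ⟪v, P v⟫ := real_inner_comm _ _

lemma div_le_log (s : ℝ) (hs : 0 ≤ s) : s / (1 + s) ≤ Real.log (1 + s) := by
  have h1 : (0:ℝ) < 1 + s := by linarith
  have h2 := Real.log_le_sub_one_of_pos (inv_pos.mpr h1)
  rw [Real.log_inv] at h2
  have : 1 - (1+s)⁻¹ ≤ Real.log (1+s) := by linarith
  calc s / (1+s) = 1 - (1+s)⁻¹ := by field_simp; ring
    _ ≤ Real.log (1+s) := this

noncomputable def zeta (G : ℕ → V) (n : ℕ) : V := ∑ i ∈ Finset.range n, G i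

lemma potential (lam : ℝ) (hlam : 0 < lam) (G : ℕ → V) (N : ℕ)
    (hopt : ∀ n < N, ⟪zeta G n, opP lam G n (G n)⟫ ≤ 0) :
    ⟪zeta G N, opP lam G N (zeta G N)⟫ ≤
      ∑ n ∈ Finset.range N, Real.log (1 + ⟪G n, opP lam G n (G n)⟫) := by
  induction N with
  | zero => simp [zeta, opP]
  | succ N ih =>
      obtain ⟨hsym, hAP, hPA⟩ := opP_spec lam hlam G N
      set P := opP lam G N with hPdef
      set g := G N with hgdef
      set z := zeta G N with hzdef
      set a : ℝ := ⟪z, P g⟫ with hadef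
      set s : ℝ := ⟪g, P g⟫ with hsdef
      have hs0 : 0 ≤ s := opP_inner_nonneg lam hlam G N g
      have hs1 : (0:ℝ) < 1 + s := by linarith
      have ha : a ≤ 0 := hopt N (Nat.lt_succ_self N)
      have hz1 : zeta G (N+1) = z + g := by rw [hzdef, hgdef, zeta, zeta, Finset.sum_range_succ]
      have hP1 : opP lam G (N+1) = P - (1 + s)⁻¹ • rankOne (P g) := rfl
      have hexp : ⟪zeta G (N+1), opP lam G (N+1) (zeta G (N+1))⟫
          = ⟪z, P z⟫ + 2*a + s - (1+s)⁻¹ * (a + s)^2 := by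
        rw [hz1, hP1]
        simp only [ContinuousLinearMap.sub_apply, ContinuousLinearMap.smul_apply,
          rankOne_apply, map_add, inner_add_left, inner_add_right, inner_sub_right,
          inner_smul_right]
        have e1 : ⟪z, P g⟫ = a := rfl
        have e2 : ⟪g, P g⟫ = s := rfl
        have e3 : ⟪g, P z⟫ = a := by rw [← hsym g z, real_inner_comm]
        have e4 : ⟪P g, z⟫ = a := by rw [real_inner_comm]
        have e5 : ⟪P g, g⟫ = s := by rw [real_inner_comm]
        rw [e1, e2, e3, e4, e5]
        ring
      have key : 2*a + s - (1+s)⁻¹ * (a + s)^2 ≤ Real.log (1 + s) := by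
        have hdiff : s/(1+s) - (2*a + s - (1+s)⁻¹*(a+s)^2) = (a^2 - 2*a)/(1+s) := by
          field_simp
          ring
        have h0 : 0 ≤ (a^2 - 2*a)/(1+s) := by
          apply div_nonneg _ hs1.le
          nlinarith
        have := div_le_log s hs0
        linarith
      have ihh : ⟪z, P z⟫ ≤ ∑ n ∈ Finset.range N, Real.log (1 + ⟪G n, opP lam G n (G n)⟫) :=
        ih (fun n hn => hopt n (Nat.lt_succ_of_lt hn))
      rw [hexp, Finset.sum_range_succ]
      have : Real.log (1 + ⟪G N, opP lam G N (G N)⟫) = Real.log (1+s) := rfl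
      rw [this]
      linarith


lemma cs_form (A : V →L[ℝ] V) (hsym : ∀ v w, ⟪A v, w⟫ = ⟪v, A w⟫)
    (hpos : ∀ v, 0 ≤ ⟪v, A v⟫) (u w : V) :
    ⟪u, A w⟫^2 ≤ ⟪u, A u⟫ * ⟪w, A w⟫ := by
  have hcomm : ⟪w, A u⟫ = ⟪u, A w⟫ := by rw [← hsym w u, real_inner_comm]
  have h : ∀ t : ℝ, 0 ≤ ⟪u, A u⟫ * (t*t) + (2*⟪u, A w⟫)*t + ⟪w, A w⟫ := by
    intro t
    have h0 := hpos (t • u + w)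
    simp only [map_add, map_smul, inner_add_left, inner_add_right, inner_smul_left,
      inner_smul_right, RCLike.ofReal_real_eq_id, id, conj_trivial] at h0
    rw [hcomm] at h0
    nlinarith
  have hd := discrim_le_zero h
  rw [discrim] at hd
  nlinarith


lemma det_gram (lam : ℝ) (hlam : 0 < lam) (G : ℕ → V) (n : ℕ) :
    (1 + lam⁻¹ • Matrix.of (fun i j : Fin n => (⟪G i, G j⟫ : ℝ))).det
      = ∏ i ∈ Finset.range n, (1 + ⟪G i, opP lam G i (G i)⟫) := by
  induction n with
  | zero => simp
  | succ n ih =>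
      obtain ⟨hsym, hAP, hPA⟩ := opP_spec lam hlam G n
      set M : Matrix (Fin n) (Fin n) ℝ :=
        1 + lam⁻¹ • Matrix.of (fun i j : Fin n => (⟪G i, G j⟫ : ℝ)) with hM
      have hMdet : M.det = ∏ i ∈ Finset.range n, (1 + ⟪G i, opP lam G i (G i)⟫) := ih
      have hMpos : 0 < M.det := by
        rw [hMdet]
        refine Finset.prod_pos fun i _ => ?_
        have := opP_inner_nonneg lam hlam G i (G i)
        linarith
      have hinv : Invertible M := M.invertibleOfIsUnitDet (isUnit_iff_ne_zero.mpr hMpos.ne')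
      set B : Matrix (Fin n) (Fin 1) ℝ := Matrix.of fun i _ => lam⁻¹ * ⟪G i, G n⟫ with hB
      set C : Matrix (Fin 1) (Fin n) ℝ := Matrix.of fun _ j => lam⁻¹ * ⟪G n, G j⟫ with hC
      set D : Matrix (Fin 1) (Fin 1) ℝ := Matrix.of fun _ _ => 1 + lam⁻¹ * ⟪G n, G n⟫ with hD
      have hsub : (1 + lam⁻¹ • Matrix.of (fun i j : Fin (n+1) =>
          (⟪G i, G j⟫ : ℝ))).submatrix finSumFinEquiv finSumFinEquiv
            = Matrix.fromBlocks M B C D := by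
        ext i j
        rcases i with i | i <;> rcases j with j | j <;>
          simp [Matrix.submatrix_apply, Matrix.one_apply, hM, hB, hC, hD,
            finSumFinEquiv, Fin.ext_iff, Fin.fin_one_eq_zero] <;>
          omega
      have hMB : M * (⅟M * B) = B := by
        rw [← Matrix.mul_assoc, mul_invOf_self, Matrix.one_mul]
      set c : Fin n → ℝ := fun k => (⅟M * B) k 0 with hc
      have hyprop : ∀ j, (∑ k, M j k * c k) = B j 0 := by
        intro j
        conv_rhs => rw [← hMB]
        rw [Matrix.mul_apply]
      have hstar : ∀ j : Fin n, c j + lam⁻¹ * ∑ k : Fin n, ⟪G j, G k⟫ * c k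
          = lam⁻¹ * ⟪G j, G n⟫ := by
        intro j
        have h1 := hyprop j
        simp only [hM, hB, Matrix.add_apply, Matrix.smul_apply, Matrix.one_apply,
          Matrix.of_apply, smul_eq_mul, add_mul, ite_mul, one_mul, zero_mul,
          Finset.sum_add_distrib, Finset.sum_ite_eq, Finset.mem_univ, if_true] at h1
        rw [← h1, Finset.mul_sum]
        congr 1
        exact Finset.sum_congr rfl fun k _ => (mul_assoc _ _ _).symm
      set x : V := lam⁻¹ • (G n - ∑ k : Fin n, c k • G k) with hx
      have hAx : opA lam G n x = G n := by
        rw [opA_apply, hx, smul_smul, mul_inv_cancel₀ hlam.ne', one_smul]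
        have hinner : ∀ i : Fin n, ⟪G (i:ℕ), lam⁻¹ • (G n - ∑ k : Fin n, c k • G k)⟫ = c i := by
          intro i
          rw [inner_smul_right, inner_sub_right, inner_sum]
          simp only [inner_smul_right]
          have := hstar i
          field_simp at this ⊢
          have hsum : ∑ x : Fin n, c x * ⟪G (i:ℕ), G (x:ℕ)⟫
              = ∑ x : Fin n, ⟪G (i:ℕ), G (x:ℕ)⟫ * c x :=
            Finset.sum_congr rfl fun k _ => mul_comm _ _
          rw [hsum]
          linarith [this]
        rw [← Fin.sum_univ_eq_sum_range (fun i => ⟪G i, lam⁻¹ • (G n - ∑ k : Fin n, c k • G k)⟫ • G i) n]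
        have : ∀ i : Fin n, (⟪G (i:ℕ), lam⁻¹ • (G n - ∑ k : Fin n, c k • G k)⟫ : ℝ) • G (i:ℕ)
            = c i • G (i:ℕ) := fun i => by rw [hinner i]
        rw [Finset.sum_congr rfl fun i _ => this i]
        abel
      have hPg : opP lam G n (G n) = x := by
        conv_lhs => rw [← hAx]
        exact hPA x
      have hsn : ⟪G n, opP lam G n (G n)⟫
          = lam⁻¹ * ⟪G n, G n⟫ - ∑ k : Fin n, (lam⁻¹ * ⟪G n, G (k:ℕ)⟫) * c k := by
        rw [hPg, hx, inner_smul_right, inner_sub_right, inner_sum]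
        simp only [inner_smul_right]
        rw [mul_sub, Finset.mul_sum]
        congr 1
        refine Finset.sum_congr rfl fun k _ => ?_
        ring
      have hschur : (D - C * ⅟M * B).det = 1 + ⟪G n, opP lam G n (G n)⟫ := by
        rw [Matrix.det_fin_one, Matrix.sub_apply, Matrix.mul_assoc, Matrix.mul_apply]
        have : ∀ j : Fin n, C 0 j * (⅟M * B) j 0 = (lam⁻¹ * ⟪G n, G j⟫) * c j := fun j => rfl
        rw [Finset.sum_congr rfl fun j _ => this j, hsn, hD]
        simp only [Matrix.of_apply]
        ring
      rw [← Matrix.det_submatrix_equiv_self finSumFinEquiv, hsub,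
        Matrix.det_fromBlocks₁₁, hschur, hMdet, Finset.prod_range_succ]


lemma sqrt_add_le' (x y : ℝ) (hx : 0 ≤ x) (hy : 0 ≤ y) :
    Real.sqrt (x + y) ≤ Real.sqrt x + Real.sqrt y := by
  have h1 : x + y ≤ (Real.sqrt x + Real.sqrt y)^2 := by
    have hx2 := Real.sq_sqrt hx
    have hy2 := Real.sq_sqrt hy
    have := mul_nonneg (Real.sqrt_nonneg x) (Real.sqrt_nonneg y)
    nlinarith
  calc Real.sqrt (x + y) ≤ Real.sqrt ((Real.sqrt x + Real.sqrt y)^2) := Real.sqrt_le_sqrt h1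
    _ = Real.sqrt x + Real.sqrt y := Real.sqrt_sq (by positivity)

lemma qsq_le (q d B : ℝ) (h1 : q ≤ d) (h2 : -B ≤ q) (h3 : q ≤ B) (h4 : 0 ≤ d) (h5 : 0 < B) :
    q^2 ≤ B*(2*d - q) := by
  rcases le_or_gt 0 q with h | h
  · nlinarith
  · nlinarith

lemma quad_solve (R b c : ℝ) (hb : 0 ≤ b) (hc : 0 ≤ c) (hR : R^2 ≤ b*R + c) :
    R ≤ b + Real.sqrt c := by
  by_contra hcon
  push_neg at hcon
  have hs := Real.sqrt_nonneg c
  have hsq := Real.sq_sqrt hc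
  nlinarith

end Aux

set_option maxHeartbeats 1000000 in
/-- Suboptimality-robust regret bound for CoRectron: with possibly suboptimal feedback,
`R_T(u) ≤ B·H_T + ‖u‖·√(λ·H_T) + √(2B·Δ_T·H_T)` where `H_T = log det (I_T + λ⁻¹ K_T)`
and `Δ_T = Σ_t δ_t` bounds the cumulative suboptimality. -/
theorem corectron_suboptimality_robust_bound
    {V : Type*} [NormedAddCommGroup V] [InnerProductSpace ℝ V] [CompleteSpace V]
    (T : ℕ) (lam B : ℝ) (hlam : 0 < lam) (hB : 0 < B)
    (X : Fin T → Set V) (hXne : ∀ t, (X t).Nonempty)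
    (xhat xobs g : Fin T → V)
    (A : ℕ → (V →L[ℝ] V)) (ζ : ℕ → V) (what : Fin T → V)
    (hA0 : A 0 = lam • (1 : V →L[ℝ] V)) (hζ0 : ζ 0 = 0)
    (hwhat : ∀ t : Fin T, what t = -(Ring.inverse (A t)) (ζ t))
    (hxhat_mem : ∀ t, xhat t ∈ X t)
    (hxhat_opt : ∀ t : Fin T, ∀ y ∈ X t, ⟪what t, y⟫ ≤ ⟪what t, xhat t⟫)
    (hxobs_mem : ∀ t, xobs t ∈ X t)
    (hg : ∀ t, g t = xhat t - xobs t)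
    (hA : ∀ t : Fin T, A ((t : ℕ) + 1) = A t + rankOne (g t))
    (hζ : ∀ t : Fin T, ζ ((t : ℕ) + 1) = ζ t + g t)
    (u : V)
    (hbound : ∀ t : Fin T, ∀ x ∈ X t, ∀ x' ∈ X t, ⟪u, x - x'⟫ ≤ B)
    (δ : Fin T → ℝ) (hδ0 : ∀ t, 0 ≤ δ t)
    (hδ : ∀ t, ⟪u, xhat t - xobs t⟫ ≤ δ t)
    (K : Matrix (Fin T) (Fin T) ℝ)
    (hK : ∀ i j, K i j = ⟪g i, g j⟫) :
    (∑ t, ⟪u, xobs t - xhat t⟫) ≤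
      B * Real.log (1 + lam⁻¹ • K).det +
        ‖u‖ * Real.sqrt (lam * Real.log (1 + lam⁻¹ • K).det) +
        Real.sqrt (2 * B * (∑ t, δ t) * Real.log (1 + lam⁻¹ • K).det) := by
  classical
  set G : ℕ → V := fun k => if h : k < T then g ⟨k, h⟩ else 0 with hGdef
  have hGt : ∀ t : Fin T, G (t : ℕ) = g t := fun t => by
    simp [hGdef, t.isLt]
  -- A agrees with opA on 0..T
  have hAeq : ∀ m, m ≤ T → A m = opA lam G m := by
    intro m
    induction m with
    | zero => intro _; rw [hA0]; rfl
    | succ m ih =>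
        intro hm
        have hmT : m < T := hm
        have h1 := hA ⟨m, hmT⟩
        simp only [Fin.val_mk] at h1
        rw [h1, ih (le_of_lt hmT)]
        have : g ⟨m, hmT⟩ = G m := (hGt ⟨m, hmT⟩).symm
        rw [this]
        rfl
  have hζeq : ∀ m, m ≤ T → ζ m = zeta G m := by
    intro m
    induction m with
    | zero => intro _; rw [hζ0]; simp [zeta]
    | succ m ih =>
        intro hm
        have hmT : m < T := hm
        have h1 := hζ ⟨m, hmT⟩
        simp only [Fin.val_mk] at h1
        rw [h1, ih (le_of_lt hmT), zeta, zeta, Finset.sum_range_succ, hGt ⟨m, hmT⟩]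
  -- Ring.inverse (A t) = opP
  have hinvA : ∀ m, m ≤ T → Ring.inverse (A m) = opP lam G m := by
    intro m hm
    obtain ⟨hsym, hAP, hPA⟩ := opP_spec lam hlam G m
    have hu1 : opA lam G m * opP lam G m = 1 := by
      ext v; exact hAP v
    have hu2 : opP lam G m * opA lam G m = 1 := by
      ext v; exact hPA v
    rw [hAeq m hm]
    let U : (V →L[ℝ] V)ˣ := ⟨opA lam G m, opP lam G m, hu1, hu2⟩
    have : opA lam G m = (U : V →L[ℝ] V) := rfl
    rw [this, Ring.inverse_unit U]
    rfl
  -- optimality transfers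
  have hopt : ∀ m < T, ⟪zeta G m, opP lam G m (G m)⟫ ≤ 0 := by
    intro m hm
    set t : Fin T := ⟨m, hm⟩ with ht
    obtain ⟨hsym, hAP, hPA⟩ := opP_spec lam hlam G m
    have h1 := hxhat_opt t (xobs t) (hxobs_mem t)
    have h2 : 0 ≤ ⟪what t, g t⟫ := by
      rw [hg t, inner_sub_right]; linarith
    have h3 : what t = -(opP lam G m (zeta G m)) := by
      rw [hwhat t, hinvA m (le_of_lt hm), hζeq m (le_of_lt hm)]
    rw [h3, inner_neg_left, ← hGt t] at h2
    have h4 : ⟪opP lam G m (zeta G m), G m⟫ ≤ 0 := by linarith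
    rwa [hsym] at h4
  -- notation
  set S : ℝ := ∑ n ∈ Finset.range T, Real.log (1 + ⟪G n, opP lam G n (G n)⟫) with hS
  obtain ⟨hsymT, hAPT, hPAT⟩ := opP_spec lam hlam G T
  set z : V := zeta G T with hz
  set ψ : ℝ := ⟪z, opP lam G T z⟫ with hψ
  have hψS : ψ ≤ S := potential lam hlam G T hopt
  have hψ0 : 0 ≤ ψ := opP_inner_nonneg lam hlam G T z
  have hS0 : 0 ≤ S := by
    refine Finset.sum_nonneg fun n _ => Real.log_nonneg ?_
    have := opP_inner_nonneg lam hlam G n (G n)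
    linarith
  -- determinant identity
  have hKeq : (1 + lam⁻¹ • K) = 1 + lam⁻¹ • Matrix.of (fun i j : Fin T => (⟪G i, G j⟫ : ℝ)) := by
    congr 1
    ext i j
    rw [Matrix.smul_apply, Matrix.smul_apply, hK i j, Matrix.of_apply, hGt i, hGt j]
  have hdet : (1 + lam⁻¹ • K).det = ∏ i ∈ Finset.range T, (1 + ⟪G i, opP lam G i (G i)⟫) := by
    rw [hKeq]; exact det_gram lam hlam G T
  have hlogdet : Real.log (1 + lam⁻¹ • K).det = S := by
    rw [hdet, Real.log_prod]
    intro i _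
    have := opP_inner_nonneg lam hlam G i (G i)
    intro hzero; linarith
  -- Cauchy-Schwarz
  have hApos : ∀ v : V, 0 ≤ ⟪v, opA lam G T v⟫ := fun v =>
    le_trans (by positivity) (opA_pos lam G T v)
  have hcs : ⟪u, z⟫^2 ≤ ⟪u, opA lam G T u⟫ * ψ := by
    have h1 : z = opA lam G T (opP lam G T z) := (hAPT z).symm
    have h2 := cs_form (opA lam G T) (opA_symm lam G T) hApos u (opP lam G T z)
    have h3 : ⟪opP lam G T z, opA lam G T (opP lam G T z)⟫ = ψ := by
      rw [hAPT z, real_inner_comm]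
    rw [h3] at h2
    rw [hψ]
    calc ⟪u, z⟫^2 = ⟪u, opA lam G T (opP lam G T z)⟫^2 := by rw [← h1]
      _ ≤ ⟪u, opA lam G T u⟫ * ⟪z, opP lam G T z⟫ := by
          rw [hψ] at h2; exact h2
  -- quadratic form value
  have hQu : ⟪u, opA lam G T u⟫ = lam * ‖u‖^2 + ∑ i ∈ Finset.range T, ⟪u, G i⟫^2 := by
    rw [opA_apply, inner_add_right, inner_smul_right, inner_sum, real_inner_self_eq_norm_sq]
    congr 1
    refine Finset.sum_congr rfl fun i _ => ?_
    rw [inner_smul_right, real_inner_comm (G i) u]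
    ring
  -- regret as inner product
  set R : ℝ := ∑ t, ⟪u, xobs t - xhat t⟫ with hR
  have hterm : ∀ t : Fin T, ⟪u, xobs t - xhat t⟫ = -⟪u, G (t:ℕ)⟫ := by
    intro t
    rw [hGt t, hg t, inner_sub_right, inner_sub_right]
    ring
  have hRz : R = -⟪u, z⟫ := by
    rw [hR, Finset.sum_congr rfl fun t _ => hterm t, hz, zeta, inner_sum,
      ← Fin.sum_univ_eq_sum_range (fun i => (⟪u, G i⟫ : ℝ)) T, ← Finset.sum_neg_distrib]
  -- per-round scalar bounds
  have hq1 : ∀ t : Fin T, ⟪u, G (t:ℕ)⟫ ≤ δ t := by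
    intro t
    have := hδ t
    rwa [← hg t, ← hGt t] at this
  have hq2 : ∀ t : Fin T, -B ≤ ⟪u, G (t:ℕ)⟫ := by
    intro t
    have := hbound t (xobs t) (hxobs_mem t) (xhat t) (hxhat_mem t)
    have h2 : ⟪u, xobs t - xhat t⟫ = -⟪u, G (t:ℕ)⟫ := hterm t
    linarith [h2 ▸ this]
  have hq3 : ∀ t : Fin T, ⟪u, G (t:ℕ)⟫ ≤ B := by
    intro t
    have := hbound t (xhat t) (hxhat_mem t) (xobs t) (hxobs_mem t)
    rwa [← hg t, ← hGt t] at this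
  have hsumsq : ∑ i ∈ Finset.range T, ⟪u, G i⟫^2 ≤ B * (2 * (∑ t, δ t) + R) := by
    rw [← Fin.sum_univ_eq_sum_range (fun i => (⟪u, G i⟫ : ℝ)^2) T]
    have h1 : ∀ t : Fin T, ⟪u, G (t:ℕ)⟫^2 ≤ B * (2 * δ t - ⟪u, G (t:ℕ)⟫) := fun t =>
      qsq_le _ _ _ (hq1 t) (hq2 t) (hq3 t) (hδ0 t) hB
    calc ∑ t : Fin T, ⟪u, G (t:ℕ)⟫^2 ≤ ∑ t : Fin T, B * (2 * δ t - ⟪u, G (t:ℕ)⟫) :=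
          Finset.sum_le_sum fun t _ => h1 t
      _ = B * (2 * (∑ t, δ t) + R) := by
          have hRq : R = ∑ t : Fin T, -⟪u, G (t:ℕ)⟫ := by
            rw [hR]; exact Finset.sum_congr rfl fun t _ => hterm t
          rw [hRq, ← Finset.mul_sum, Finset.sum_sub_distrib, Finset.sum_neg_distrib,
            ← Finset.mul_sum]
          ring
  -- final assembly
  have hΔ0 : (0:ℝ) ≤ ∑ t, δ t := Finset.sum_nonneg fun t _ => hδ0 t
  have hfin : R ≤ B * S + ‖u‖ * Real.sqrt (lam * S) + Real.sqrt (2 * B * (∑ t, δ t) * S) := by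
    have hc0 : (0:ℝ) ≤ (lam * ‖u‖^2 + 2 * B * (∑ t, δ t)) * S := by
      apply mul_nonneg _ hS0
      have h1 : (0:ℝ) ≤ lam * ‖u‖^2 := by positivity
      nlinarith [hΔ0]
    have hsplit : Real.sqrt ((lam * ‖u‖^2 + 2 * B * (∑ t, δ t)) * S)
        ≤ ‖u‖ * Real.sqrt (lam * S) + Real.sqrt (2 * B * (∑ t, δ t) * S) := by
      have he : (lam * ‖u‖^2 + 2 * B * (∑ t, δ t)) * S
          = lam * ‖u‖^2 * S + 2 * B * (∑ t, δ t) * S := by ring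
      have h2 : (0:ℝ) ≤ 2 * B * (∑ t, δ t) * S := by
        apply mul_nonneg _ hS0
        nlinarith [hΔ0]
      have h3 := sqrt_add_le' (lam * ‖u‖^2 * S) (2 * B * (∑ t, δ t) * S) (by positivity) h2
      have hns : Real.sqrt (lam * ‖u‖^2 * S) = ‖u‖ * Real.sqrt (lam * S) := by
        rw [show lam * ‖u‖^2 * S = ‖u‖^2 * (lam * S) by ring,
          Real.sqrt_mul (sq_nonneg _), Real.sqrt_sq (norm_nonneg u)]
      rw [he]
      rw [hns] at h3
      exact h3
    rcases le_or_gt R 0 with hR0 | hR0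
    · have h1 : (0:ℝ) ≤ B * S := by positivity
      have h2 : (0:ℝ) ≤ ‖u‖ * Real.sqrt (lam * S) := by positivity
      have h3 := Real.sqrt_nonneg (2 * B * (∑ t, δ t) * S)
      linarith
    · have hkey : R^2 ≤ (B * S) * R + (lam * ‖u‖^2 + 2 * B * (∑ t, δ t)) * S := by
        have h1 : R^2 = ⟪u, z⟫^2 := by rw [hRz]; ring
        have h2 : ⟪u, opA lam G T u⟫ ≤ lam * ‖u‖^2 + B * (2 * (∑ t, δ t) + R) := by
          rw [hQu]; linarith [hsumsq]
        have hQ0 : (0:ℝ) ≤ lam * ‖u‖^2 + B * (2 * (∑ t, δ t) + R) := by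
          have : (0:ℝ) ≤ lam * ‖u‖^2 := by positivity
          nlinarith [hΔ0]
        have h3 : ⟪u, z⟫^2 ≤ (lam * ‖u‖^2 + B * (2 * (∑ t, δ t) + R)) * S := by
          calc ⟪u, z⟫^2 ≤ ⟪u, opA lam G T u⟫ * ψ := hcs
            _ ≤ (lam * ‖u‖^2 + B * (2 * (∑ t, δ t) + R)) * S := by
                apply mul_le_mul h2 hψS hψ0 hQ0
        have h4 : (lam * ‖u‖^2 + B * (2 * (∑ t, δ t) + R)) * S
            = (B * S) * R + (lam * ‖u‖^2 + 2 * B * (∑ t, δ t)) * S := by ring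
        rw [h4] at h3
        rw [h1]
        exact h3
      have hq := quad_solve R (B * S) ((lam * ‖u‖^2 + 2 * B * (∑ t, δ t)) * S)
        (by positivity) hc0 hkey
      linarith
  rw [hlogdet]
  exact hfin
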